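/- Let h: (0,1) → ℝ^q assign mean basis values and suppose the mean basis consists only of an intercept and linear terms in the input. If each input coordinate is transformed by x̃_l = (x_l − c_{0l})/c_{1l} with c_{1l} > 0, and the reference prior for range parameters γ under design {x_i} is π^R(γ_1,…,γ_p) ∝ |I*(γ)|^{1/2} with I* the expected Fisher information matrix of the GaSP, then the reference prior under the transformed design satisfies π̃^R(γ_1,…,γ_p) ∝ π^R(c_{11}γ_1,…,c_{1p}γ_p) — equivalently, for a product correlation c(x_a,x_b) = ∏_l c_l(|x_{al}−x_{bl}|/γ_l) the Fisher information matrix I* is invariant under simultaneously rescaling the lth input distances by c_{1l} and the lth range parameter by c_{1l}. -/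

import Mathlib

open Matrix Finset Real

noncomputable section

/-- Product correlation matrix: `R(γ)_{ij} = ∏_l c_l(|x_{il} - x_{jl}| / γ_l)`. -/
def corrMatrix {n p : ℕ} (c : Fin p → ℝ → ℝ) (x : Fin n → Fin p → ℝ)
    (γ : Fin p → ℝ) : Matrix (Fin n) (Fin n) ℝ :=
  Matrix.of fun i j => ∏ l, c l (|x i l - x j l| / γ l)

/-- Partial derivative `Ṙ_l = ∂R/∂γ_l`, expressed via the derivative `c'` of each
one-dimensional kernel `c_l` (which depends on the input only through `d_l/γ_l`). -/
def corrMatrixDeriv {n p : ℕ} (c c' : Fin p → ℝ → ℝ) (x : Fin n → Fin p → ℝ)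
    (γ : Fin p → ℝ) (l₀ : Fin p) : Matrix (Fin n) (Fin n) ℝ :=
  Matrix.of fun i j =>
    (∏ l ∈ Finset.univ.erase l₀, c l (|x i l - x j l| / γ l)) *
      (c' l₀ (|x i l₀ - x j l₀| / γ l₀) * (-(|x i l₀ - x j l₀|) / γ l₀ ^ 2))

/-- Mean basis matrix consisting of an intercept and the linear terms of the input. -/
def meanBasis {n p : ℕ} (x : Fin n → Fin p → ℝ) : Matrix (Fin n) (Fin (p + 1)) ℝ :=
  Matrix.of fun i j => Fin.cases 1 (fun l => x i l) j

/-- `Q = R⁻¹ - R⁻¹ H (Hᵀ R⁻¹ H)⁻¹ Hᵀ R⁻¹`. -/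
def qMatrix {n p : ℕ} (c : Fin p → ℝ → ℝ) (x : Fin n → Fin p → ℝ)
    (γ : Fin p → ℝ) : Matrix (Fin n) (Fin n) ℝ :=
  let R := corrMatrix c x γ
  let H := meanBasis x
  R⁻¹ - R⁻¹ * H * (H.transpose * R⁻¹ * H)⁻¹ * H.transpose * R⁻¹

/-- `W_l = Ṙ_l Q`. -/
def wMatrix {n p : ℕ} (c c' : Fin p → ℝ → ℝ) (x : Fin n → Fin p → ℝ)
    (γ : Fin p → ℝ) (l : Fin p) : Matrix (Fin n) (Fin n) ℝ :=
  corrMatrixDeriv c c' x γ l * qMatrix c x γ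

/-- Expected Fisher information matrix `I*(γ)` of the GaSP (with `q = p+1` mean basis
functions): `(I*)_{00} = n - q`, `(I*)_{0,l} = tr(W_l)`, `(I*)_{l,m} = tr(W_l W_m)`. -/
def fisherInfo {n p : ℕ} (c c' : Fin p → ℝ → ℝ) (x : Fin n → Fin p → ℝ)
    (γ : Fin p → ℝ) : Matrix (Fin (p + 1)) (Fin (p + 1)) ℝ :=
  Matrix.of fun i j =>
    Fin.cases
      (Fin.cases ((n : ℝ) - (p + 1)) (fun m => (wMatrix c c' x γ m).trace) j)
      (fun l => Fin.cases ((wMatrix c c' x γ l).trace)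
        (fun m => (wMatrix c c' x γ l * wMatrix c c' x γ m).trace) j) i

/-- Reference prior density (up to normalization): `π^R(γ) = |I*(γ)|^{1/2}`. -/
def refPrior {n p : ℕ} (c c' : Fin p → ℝ → ℝ) (x : Fin n → Fin p → ℝ)
    (γ : Fin p → ℝ) : ℝ :=
  Real.sqrt |(fisherInfo (n := n) c c' x γ).det|

-- scalar lemmas
lemma abs_sub_div' (a b c k : ℝ) (hk : 0 < k) :
    |(a - c) / k - (b - c) / k| = |a - b| / k := by
  rw [div_sub_div_same, show a - c - (b - c) = a - b by ring, abs_div, abs_of_pos hk]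

lemma ratio_eq (a b c k g : ℝ) (hk : 0 < k) :
    |(a - c) / k - (b - c) / k| / g = |a - b| / (k * g) := by
  rw [abs_sub_div' a b c k hk, div_div]

lemma corr_transform {n p : ℕ} (c : Fin p → ℝ → ℝ) (x : Fin n → Fin p → ℝ)
    (c0 c1 : Fin p → ℝ) (hc1 : ∀ l, 0 < c1 l) (γ : Fin p → ℝ) :
    corrMatrix c (fun i l => (x i l - c0 l) / c1 l) γ
      = corrMatrix c x (fun l => c1 l * γ l) := by
  ext i j
  simp only [corrMatrix, Matrix.of_apply]
  exact Finset.prod_congr rfl fun l _ => by rw [ratio_eq _ _ _ _ _ (hc1 l)]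

lemma corrDeriv_transform {n p : ℕ} (c c' : Fin p → ℝ → ℝ) (x : Fin n → Fin p → ℝ)
    (c0 c1 : Fin p → ℝ) (hc1 : ∀ l, 0 < c1 l) (γ : Fin p → ℝ) (hγ : ∀ l, 0 < γ l)
    (l₀ : Fin p) :
    corrMatrixDeriv c c' (fun i l => (x i l - c0 l) / c1 l) γ l₀
      = c1 l₀ • corrMatrixDeriv c c' x (fun l => c1 l * γ l) l₀ := by
  ext i j
  simp only [corrMatrixDeriv, Matrix.of_apply, Matrix.smul_apply, smul_eq_mul]
  rw [ratio_eq _ _ _ _ _ (hc1 l₀), abs_sub_div' _ _ _ _ (hc1 l₀)]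
  have h1 : ∀ l, |(x i l - c0 l) / c1 l - (x j l - c0 l) / c1 l| / γ l
      = |x i l - x j l| / (c1 l * γ l) := fun l => ratio_eq _ _ _ _ _ (hc1 l)
  rw [Finset.prod_congr rfl (fun l _ => by rw [h1 l])]
  have hk := (hc1 l₀).ne'
  have hg := (hγ l₀).ne'
  field_simp

-- the affine change-of-basis matrix and its inverse
def scaleMat (p : ℕ) (c0 c1 : Fin p → ℝ) : Matrix (Fin (p + 1)) (Fin (p + 1)) ℝ :=
  Matrix.of fun i j =>
    Fin.cases (Fin.cases 1 (fun m => -c0 m / c1 m) j)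
      (fun l => Fin.cases 0 (fun m => if l = m then (c1 m)⁻¹ else 0) j) i

def scaleMatInv (p : ℕ) (c0 c1 : Fin p → ℝ) : Matrix (Fin (p + 1)) (Fin (p + 1)) ℝ :=
  Matrix.of fun i j =>
    Fin.cases (Fin.cases 1 (fun m => c0 m) j)
      (fun l => Fin.cases 0 (fun m => if l = m then c1 m else 0) j) i

lemma scaleMat_mul_inv (p : ℕ) (c0 c1 : Fin p → ℝ) (hc1 : ∀ l, 0 < c1 l) :
    scaleMat p c0 c1 * scaleMatInv p c0 c1 = 1 := by
  ext i j
  rw [Matrix.mul_apply, Fin.sum_univ_succ]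
  refine Fin.cases ?_ (fun l => ?_) i <;> refine Fin.cases ?_ (fun m => ?_) j <;>
    simp [scaleMat, scaleMatInv, Matrix.one_apply, Fin.succ_ne_zero, mul_ite,
      Finset.sum_ite_eq, (hc1 _).ne', Fin.succ_inj, eq_comm, div_mul_cancel₀,
      inv_mul_cancel₀]

lemma scaleMat_inv_mul (p : ℕ) (c0 c1 : Fin p → ℝ) (hc1 : ∀ l, 0 < c1 l) :
    scaleMatInv p c0 c1 * scaleMat p c0 c1 = 1 := by
  ext i j
  rw [Matrix.mul_apply, Fin.sum_univ_succ]
  refine Fin.cases ?_ (fun l => ?_) i <;> refine Fin.cases ?_ (fun m => ?_) j <;>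
    simp [scaleMat, scaleMatInv, Matrix.one_apply, Fin.succ_ne_zero, mul_ite,
      Finset.sum_ite_eq, (hc1 _).ne', Fin.succ_inj, eq_comm, mul_inv_cancel₀]
  · field_simp
    ring

lemma meanBasis_transform {n p : ℕ} (x : Fin n → Fin p → ℝ)
    (c0 c1 : Fin p → ℝ) (hc1 : ∀ l, 0 < c1 l) :
    meanBasis (fun i l => (x i l - c0 l) / c1 l)
      = meanBasis x * scaleMat p c0 c1 := by
  ext i j
  rw [Matrix.mul_apply, Fin.sum_univ_succ]
  refine Fin.cases ?_ (fun m => ?_) j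
  · simp [meanBasis, scaleMat]
  · simp only [meanBasis, scaleMat, Matrix.of_apply, Fin.cases_zero, Fin.cases_succ,
      mul_ite, mul_zero, mul_one, one_mul]
    rw [Finset.sum_ite_eq' Finset.univ m (fun l => x i l * (c1 m)⁻¹)]
    simp only [Finset.mem_univ, if_true]
    field_simp
    ring

lemma q_transform {n p : ℕ} (c : Fin p → ℝ → ℝ) (x : Fin n → Fin p → ℝ)
    (c0 c1 : Fin p → ℝ) (hc1 : ∀ l, 0 < c1 l) (γ : Fin p → ℝ) :
    qMatrix c (fun i l => (x i l - c0 l) / c1 l) γ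
      = qMatrix c x (fun l => c1 l * γ l) := by
  have hA : Invertible (scaleMat p c0 c1) :=
    invertibleOfRightInverse _ _ (scaleMat_mul_inv p c0 c1 hc1)
  set A := scaleMat p c0 c1 with hAdef
  set R := corrMatrix c x (fun l => c1 l * γ l) with hR
  set H := meanBasis x with hH
  have h1 : ∀ Z : Matrix (Fin (p+1)) (Fin n) ℝ, A * (A⁻¹ * Z) = Z := fun Z => by
    rw [← Matrix.mul_assoc, Matrix.mul_inv_of_invertible, Matrix.one_mul]
  have h2 : ∀ Z : Matrix (Fin (p+1)) (Fin n) ℝ, (Aᵀ)⁻¹ * (Aᵀ * Z) = Z := fun Z => by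
    haveI : Invertible Aᵀ := Matrix.invertibleTranspose A
    rw [← Matrix.mul_assoc, Matrix.inv_mul_of_invertible, Matrix.one_mul]
  have key : (Aᵀ * (Hᵀ * (R⁻¹ * (H * A))))⁻¹
      = A⁻¹ * ((Hᵀ * (R⁻¹ * H))⁻¹ * (Aᵀ)⁻¹) := by
    rw [show Aᵀ * (Hᵀ * (R⁻¹ * (H * A))) = Aᵀ * (Hᵀ * (R⁻¹ * H)) * A by
        simp only [Matrix.mul_assoc],
      Matrix.mul_inv_rev, Matrix.mul_inv_rev]
  unfold qMatrix
  rw [corr_transform c x c0 c1 hc1 γ, meanBasis_transform x c0 c1 hc1, ← hAdef, ← hR, ← hH]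
  simp only [Matrix.transpose_mul, Matrix.mul_assoc, key, h1, h2]

lemma fisher_transform {n p : ℕ} (c c' : Fin p → ℝ → ℝ) (x : Fin n → Fin p → ℝ)
    (c0 c1 : Fin p → ℝ) (hc1 : ∀ l, 0 < c1 l) (γ : Fin p → ℝ) (hγ : ∀ l, 0 < γ l) :
    fisherInfo (n := n) c c' (fun i l => (x i l - c0 l) / c1 l) γ
      = Matrix.diagonal (Fin.cases 1 c1) *
          fisherInfo (n := n) c c' x (fun l => c1 l * γ l) *
          Matrix.diagonal (Fin.cases 1 c1) := by
  have hW : ∀ l, wMatrix c c' (fun i l => (x i l - c0 l) / c1 l) γ l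
      = c1 l • wMatrix c c' x (fun l => c1 l * γ l) l := fun l => by
    unfold wMatrix
    rw [corrDeriv_transform c c' x c0 c1 hc1 γ hγ l,
      q_transform c x c0 c1 hc1 γ, Matrix.smul_mul]
  ext i j
  rw [Matrix.mul_diagonal, Matrix.diagonal_mul]
  refine Fin.cases ?_ (fun l => ?_) i <;> refine Fin.cases ?_ (fun m => ?_) j <;>
    simp only [fisherInfo, Matrix.of_apply, Fin.cases_zero, Fin.cases_succ, hW,
      Matrix.trace_smul, smul_eq_mul, one_mul, mul_one, Matrix.smul_mul,
      Matrix.mul_smul, smul_smul]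
  · ring
  · ring

/-- Location–scale invariance of the reference prior when the mean basis consists of an
intercept and linear terms: if each input coordinate is transformed by
`x̃_l = (x_l - c₀_l)/c₁_l` with `c₁_l > 0`, then the reference prior under the transformed
design is proportional to `γ ↦ π^R(c₁_1 γ_1, …, c₁_p γ_p)`. -/
theorem refPrior_location_scale_invariant
    (n p : ℕ) (hp : 1 ≤ p) (hn : p + 1 ≤ n)
    (c c' : Fin p → ℝ → ℝ) (hderiv : ∀ l t, HasDerivAt (c l) (c' l t) t)
    (x : Fin n → Fin p → ℝ) (c0 c1 : Fin p → ℝ) (hc1 : ∀ l, 0 < c1 l) :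
    ∃ k : ℝ, 0 < k ∧ ∀ γ : Fin p → ℝ, (∀ l, 0 < γ l) →
      refPrior (n := n) c c' (fun i l => (x i l - c0 l) / c1 l) γ
        = k * refPrior (n := n) c c' x (fun l => c1 l * γ l) := by
  refine ⟨∏ l, c1 l, Finset.prod_pos (fun l _ => hc1 l), fun γ hγ => ?_⟩
  unfold refPrior
  rw [fisher_transform c c' x c0 c1 hc1 γ hγ, Matrix.det_mul, Matrix.det_mul,
    Matrix.det_diagonal]
  have hd : ∏ i : Fin (p + 1), (Fin.cases 1 c1 : Fin (p + 1) → ℝ) i = ∏ l, c1 l := by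
    rw [Fin.prod_univ_succ]; simp
  rw [hd]
  set K := ∏ l, c1 l with hK
  have hKpos : 0 < K := Finset.prod_pos (fun l _ => hc1 l)
  have habs : |K * (fisherInfo (n := n) c c' x fun l => c1 l * γ l).det * K|
      = K ^ 2 * |(fisherInfo (n := n) c c' x fun l => c1 l * γ l).det| := by
    rw [abs_mul, abs_mul, abs_of_pos hKpos]; ring
  rw [habs, Real.sqrt_mul (sq_nonneg K), Real.sqrt_sq hKpos.le]

end
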